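/- arXiv:2211.16817 — 12 statements merged into one kernel-verified Lean document; each statement's English description precedes it below -/
import Mathlib

section
/- Let q ≥ 2 be a real number. The set {(a1,a2,a3) ∈ ℝ³ : a1 ≥ a2 ≥ a3, q²·a1 + a2 + q·a3 ≤ 0, and q·a1 + q²·a2 + a3 ≤ 0} is equal to the set of all linear combinations with nonnegative real coefficients of the four vectors (1,0,−q), (1−q,1−q,1−q), (1,1,−(q²+q)) and (q+1,−q²,−q²). -/
/-- For `q ≥ 2`, the cone `{(a1,a2,a3) : a1 ≥ a2 ≥ a3, q²a1+a2+qa3 ≤ 0, qa1+q²a2+a3 ≤ 0}`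
equals the set of nonnegative real linear combinations of the four vectors
`(1,0,−q)`, `(1−q,1−q,1−q)`, `(1,1,−(q²+q))`, `(q+1,−q²,−q²)`. -/
theorem sp6_zip_cone_generators (q : ℝ) (hq : 2 ≤ q) :
    {a : ℝ × ℝ × ℝ | a.2.1 ≤ a.1 ∧ a.2.2 ≤ a.2.1 ∧
        q ^ 2 * a.1 + a.2.1 + q * a.2.2 ≤ 0 ∧
        q * a.1 + q ^ 2 * a.2.1 + a.2.2 ≤ 0} =
    {a : ℝ × ℝ × ℝ | ∃ c1 c2 c3 c4 : ℝ, 0 ≤ c1 ∧ 0 ≤ c2 ∧ 0 ≤ c3 ∧ 0 ≤ c4 ∧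
        a = c1 • ((1 : ℝ), (0 : ℝ), -q) + c2 • (1 - q, 1 - q, 1 - q) +
            c3 • ((1 : ℝ), (1 : ℝ), -(q ^ 2 + q)) + c4 • (q + 1, -q ^ 2, -q ^ 2)} := by
  have hq0 : (0:ℝ) < q := by linarith
  have hq1 : (0:ℝ) < q - 1 := by linarith
  have hD : (0:ℝ) < q ^ 2 + q + 1 := by positivity
  ext ⟨x, y, z⟩
  simp only [Set.mem_setOf_eq, Prod.smul_mk, smul_eq_mul, Prod.mk_add_mk, Prod.mk.injEq]
  constructor
  · rintro ⟨h1, h2, h3, h4⟩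
    rcases le_or_gt (q * x - (q + 1) * y + z) 0 with hF | hF
    · refine ⟨x - y, (-(q * x) - q ^ 2 * y - z) / ((q - 1) * (q ^ 2 + q + 1)),
        (-(q * x) + (1 + q) * y - z) / (q ^ 2 + q + 1), 0, by linarith,
        div_nonneg (by linarith) (by positivity), div_nonneg (by linarith) (by positivity),
        le_refl 0, ?_, ?_, ?_⟩ <;> field_simp <;> ring
    · refine ⟨(y - z) / q, (-(q ^ 2 * x) - y - q * z) / ((q - 1) * (q ^ 2 + q + 1)), 0,
        (q * x - (q + 1) * y + z) / (q * (q ^ 2 + q + 1)),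
        div_nonneg (by linarith) (by positivity),
        div_nonneg (by linarith) (by positivity), le_refl 0,
        div_nonneg (by linarith) (by positivity), ?_, ?_, ?_⟩ <;> field_simp <;> ring
  · rintro ⟨c1, c2, c3, c4, hc1, hc2, hc3, hc4, hx, hy, hz⟩
    subst hx hy hz
    have k2 : 0 ≤ c2 * (q - 1) := mul_nonneg hc2 (by linarith)
    have k4 : 0 ≤ c4 * q := mul_nonneg hc4 (by linarith)
    refine ⟨?_, ?_, ?_, ?_⟩ <;> nlinarith [mul_nonneg k2 hD.le, mul_nonneg hc3 hD.le,
      mul_nonneg (mul_nonneg hc3 hq0.le) hD.le, mul_nonneg (mul_nonneg k4 hq0.le) hq0.le,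
      mul_nonneg hc4 hD.le, mul_nonneg k2 hq0.le, mul_nonneg hc1 hq0.le,
      mul_nonneg (mul_nonneg hc4 hq0.le) hD.le]
end

section
/- Let q ≥ 2 be a real number. The set {(a1,a2,a3) ∈ ℝ³ : a1 ≥ a2 ≥ a3 and q²·a1 + q·a2 + a3 ≤ 0} is equal to the set of all linear combinations with nonnegative real coefficients of the three vectors (1−q,1−q,1−q), (1,1,−(q²+q)) and (q+1,−q²,−q²). -/
/-- For `q ≥ 2`, the cone `{(a1,a2,a3) : a1 ≥ a2 ≥ a3, q²a1+qa2+a3 ≤ 0}` equals the set of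
nonnegative real linear combinations of `(1−q,1−q,1−q)`, `(1,1,−(q²+q))`, `(q+1,−q²,−q²)`. -/
theorem sp6_hw_cone_generators (q : ℝ) (hq : 2 ≤ q) :
    {a : ℝ × ℝ × ℝ | a.2.1 ≤ a.1 ∧ a.2.2 ≤ a.2.1 ∧
        q ^ 2 * a.1 + q * a.2.1 + a.2.2 ≤ 0} =
    {a : ℝ × ℝ × ℝ | ∃ c1 c2 c3 : ℝ, 0 ≤ c1 ∧ 0 ≤ c2 ∧ 0 ≤ c3 ∧
        a = c1 • (1 - q, 1 - q, 1 - q) + c2 • ((1 : ℝ), (1 : ℝ), -(q ^ 2 + q)) +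
            c3 • (q + 1, -q ^ 2, -q ^ 2)} := by
  have hT : (0:ℝ) < q ^ 2 + q + 1 := by nlinarith
  have hD : (0:ℝ) < (q - 1) * (q ^ 2 + q + 1) := by nlinarith
  ext ⟨a1, a2, a3⟩
  simp only [Set.mem_setOf_eq, Prod.smul_mk, smul_eq_mul, Prod.mk_add_mk, Prod.mk.injEq]
  constructor
  · rintro ⟨h1, h2, h3⟩
    refine ⟨-(q ^ 2 * a1 + q * a2 + a3) / ((q - 1) * (q ^ 2 + q + 1)),
      (a2 - a3) / (q ^ 2 + q + 1), (a1 - a2) / (q ^ 2 + q + 1), ?_, ?_, ?_, ?_, ?_, ?_⟩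
    · exact div_nonneg (by linarith) hD.le
    · exact div_nonneg (by linarith) hT.le
    · exact div_nonneg (by linarith) hT.le
    · field_simp [show q - 1 ≠ 0 by linarith]; ring
    · field_simp [show q - 1 ≠ 0 by linarith]; ring
    · field_simp [show q - 1 ≠ 0 by linarith]; ring
  · rintro ⟨c1, c2, c3, hc1, hc2, hc3, h1, h2, h3⟩
    subst h1 h2 h3
    refine ⟨?_, ?_, ?_⟩ <;> nlinarith [mul_nonneg hc1 (by linarith : (0:ℝ) ≤ q - 1),
      mul_nonneg hc2 hT.le, mul_nonneg hc3 hT.le, mul_nonneg (mul_nonneg hc1 hT.le) (by linarith : (0:ℝ) ≤ q - 1)]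
end

section
/- Let q ≥ 1 be a real number. Suppose λ ∈ ℝ³ can be written as λ = m1·(1,0,−q) + m2·(1,1−q,−q) + m3·(1−q,1−q,1−q) + μ, where m1, m2, m3 ≥ 0 are real numbers and μ = (μ1,μ2,μ3) ∈ ℝ³ satisfies μ1 ≥ μ2 ≥ μ3 and q²·μ1 + q·μ2 + μ3 ≤ 0. Then λ1 ≥ λ2 ≥ λ3, q²·λ1 + λ2 + q·λ3 ≤ 0, and q·λ1 + q²·λ2 + λ3 ≤ 0. -/
/-- Cone inclusion `C_Hasse + C_hw ⊆ ⟨C_zip⟩` for `Sp(6)` over `F_q`. -/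
theorem sp6_hasse_plus_hw_subset_zip (q : ℝ) (hq : 1 ≤ q)
    (l μ : ℝ × ℝ × ℝ) (m1 m2 m3 : ℝ)
    (hm1 : 0 ≤ m1) (hm2 : 0 ≤ m2) (hm3 : 0 ≤ m3)
    (hμ12 : μ.2.1 ≤ μ.1) (hμ23 : μ.2.2 ≤ μ.2.1)
    (hμ : q ^ 2 * μ.1 + q * μ.2.1 + μ.2.2 ≤ 0)
    (hl : l = m1 • ((1 : ℝ), (0 : ℝ), -q) + m2 • ((1 : ℝ), 1 - q, -q) +
              m3 • (1 - q, 1 - q, 1 - q) + μ) :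
    l.2.1 ≤ l.1 ∧ l.2.2 ≤ l.2.1 ∧
      q ^ 2 * l.1 + l.2.1 + q * l.2.2 ≤ 0 ∧
      q * l.1 + q ^ 2 * l.2.1 + l.2.2 ≤ 0 := by
  subst hl
  simp only [Prod.smul_mk, Prod.fst_add, Prod.snd_add, smul_eq_mul]
  have h1 : 0 ≤ q - 1 := by linarith
  refine ⟨by nlinarith, by nlinarith, ?_, ?_⟩
  · nlinarith [mul_nonneg hm2 h1, mul_nonneg hm3 (mul_nonneg h1 (by nlinarith : (0:ℝ) ≤ q^2+q+1)), mul_nonneg h1 (sub_nonneg.2 hμ23), mul_nonneg (mul_nonneg h1 h1) hm1]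
  · nlinarith [mul_nonneg hm1 (mul_nonneg h1 (by linarith : (0:ℝ) ≤ q)), mul_nonneg hm2 (mul_nonneg h1 (by linarith : (0:ℝ) ≤ q)), mul_nonneg hm3 (mul_nonneg h1 (by nlinarith : (0:ℝ) ≤ q^2+q+1)), mul_nonneg (mul_nonneg h1 (by linarith : (0:ℝ) ≤ q)) (sub_nonneg.2 hμ12)]
end

section
/- Let q ≥ 5 be a real number and set θ(q) := (q⁵ + 2q⁴ + 2q³ + 4q² + 2q + 1) / (q⁶ + 2q⁵ − q⁴ + q³ − q² − q − 1). Suppose a = (a1,a2,a3) ∈ ℝ³ satisfies the three inequalities −(q²−q)·a1 + (q²+1)·a2 + (q−1)·a3 ≤ 0, a1 + θ(q)·a2 ≤ 0, and −(q−1)·a2 + (q+1)·a3 ≤ 0, and let n1, n2 ≥ 0 be real numbers. Then λ := a + n1·(0,1,−q) + n2·(1,−q,0) satisfies q²·λ1 + q·λ2 + λ3 ≤ 0. -/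
/-- Final inductive step for the stratum `[564]` in the `Sp(6)` proof:
`λ := a + n1·(0,1,−q) + n2·(1,−q,0)` satisfies `q²λ1 + qλ2 + λ3 ≤ 0`. -/
theorem sp6_step_564 (q a1 a2 a3 n1 n2 : ℝ) (hq : 5 ≤ q)
    (h1 : -(q ^ 2 - q) * a1 + (q ^ 2 + 1) * a2 + (q - 1) * a3 ≤ 0)
    (h2 : a1 + ((q ^ 5 + 2 * q ^ 4 + 2 * q ^ 3 + 4 * q ^ 2 + 2 * q + 1) /
          (q ^ 6 + 2 * q ^ 5 - q ^ 4 + q ^ 3 - q ^ 2 - q - 1)) * a2 ≤ 0)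
    (h3 : -(q - 1) * a2 + (q + 1) * a3 ≤ 0)
    (hn1 : 0 ≤ n1) (hn2 : 0 ≤ n2) :
    q ^ 2 * (a1 + n2) + q * (a2 + n1 - q * n2) + (a3 - q * n1) ≤ 0 := by
  have hr : (0:ℝ) ≤ q - 5 := by linarith
  have p2 := pow_nonneg hr 2
  have p3 := pow_nonneg hr 3
  have p4 := pow_nonneg hr 4
  have p5 := pow_nonneg hr 5
  have p6 := pow_nonneg hr 6
  have p7 := pow_nonneg hr 7
  have p8 := pow_nonneg hr 8
  have p9 := pow_nonneg hr 9
  have p10 := pow_nonneg hr 10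
  have p11 := pow_nonneg hr 11
  set D : ℝ := q ^ 6 + 2 * q ^ 5 - q ^ 4 + q ^ 3 - q ^ 2 - q - 1 with hDdef
  set N : ℝ := q ^ 5 + 2 * q ^ 4 + 2 * q ^ 3 + 4 * q ^ 2 + 2 * q + 1 with hNdef
  have hD : 0 < D := by
    have hid : D = 21344 + 24564 * (q - 5) + 11739 * (q - 5) ^ 2 + 2981 * (q - 5) ^ 3
        + 424 * (q - 5) ^ 4 + 32 * (q - 5) ^ 5 + (q - 5) ^ 6 := by rw [hDdef]; ring
    rw [hid]; linarith
  have hD' : D ≠ 0 := ne_of_gt hD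
  -- clear the denominator in h2
  have h2' : D * a1 + N * a2 ≤ 0 := by
    have h := mul_nonpos_of_nonneg_of_nonpos hD.le h2
    have heq : D * (a1 + N / D * a2) = D * a1 + N * a2 := by
      field_simp
    rw [heq] at h
    exact h
  -- positive multipliers
  have hB : (0:ℝ) ≤ q ^ 7 - 2 * q ^ 6 - 9 * q ^ 5 - 4 * q ^ 4 - 7 * q ^ 3
      - 3 * q ^ 2 - q + 1 := by
    have hid : q ^ 7 - 2 * q ^ 6 - 9 * q ^ 5 - 4 * q ^ 4 - 7 * q ^ 3 - 3 * q ^ 2 - q + 1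
        = 15296 + 41194 * (q - 5) + 34917 * (q - 5) ^ 2 + 14538 * (q - 5) ^ 3
          + 3396 * (q - 5) ^ 4 + 456 * (q - 5) ^ 5 + 33 * (q - 5) ^ 6 + (q - 5) ^ 7 := by
      ring
    rw [hid]; linarith
  have hA : (0:ℝ) < q ^ 9 + 5 * q ^ 8 + 4 * q ^ 7 + 8 * q ^ 5 - 6 * q ^ 4
      - 3 * q ^ 3 - 5 * q ^ 2 - 2 * q - 2 := by
    have hid : q ^ 9 + 5 * q ^ 8 + 4 * q ^ 7 + 8 * q ^ 5 - 6 * q ^ 4 - 3 * q ^ 3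
        - 5 * q ^ 2 - 2 * q - 2
        = 4239488 + 7099848 * (q - 5) + 5271550 * (q - 5) ^ 2 + 2276877 * (q - 5) ^ 3
          + 630194 * (q - 5) ^ 4 + 115858 * (q - 5) ^ 5 + 14140 * (q - 5) ^ 6
          + 1104 * (q - 5) ^ 7 + 50 * (q - 5) ^ 8 + (q - 5) ^ 9 := by ring
    rw [hid]; linarith
  have hC2 : (0:ℝ) ≤ q ^ 11 + 5 * q ^ 10 + 5 * q ^ 9 - 3 * q ^ 8 + q ^ 7
      - q ^ 6 - 6 * q ^ 5 - q ^ 4 - q := by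
    have hid : q ^ 11 + 5 * q ^ 10 + 5 * q ^ 9 - 3 * q ^ 8 + q ^ 7 - q ^ 6 - 6 * q ^ 5
        - q ^ 4 - q
        = 106293120 + 220852624 * (q - 5) + 208111100 * (q - 5) ^ 2
          + 117383480 * (q - 5) ^ 3 + 44028849 * (q - 5) ^ 4 + 11529489 * (q - 5) ^ 5
          + 2150434 * (q - 5) ^ 6 + 285631 * (q - 5) ^ 7 + 26472 * (q - 5) ^ 8
          + 1630 * (q - 5) ^ 9 + 60 * (q - 5) ^ 10 + (q - 5) ^ 11 := by ring
    rw [hid]; linarith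
  have hC3 : (0:ℝ) ≤ q ^ 9 + 4 * q ^ 8 + 7 * q ^ 7 + 7 * q ^ 6 + 3 * q ^ 5
      - 3 * q ^ 4 - 7 * q ^ 3 - 7 * q ^ 2 - 4 * q - 1 := by
    have hid : q ^ 9 + 4 * q ^ 8 + 7 * q ^ 7 + 7 * q ^ 6 + 3 * q ^ 5 - 3 * q ^ 4
        - 7 * q ^ 3 - 7 * q ^ 2 - 4 * q - 1
        = 4178304 + 6919776 * (q - 5) + 5090688 * (q - 5) ^ 2 + 2183808 * (q - 5) ^ 3
          + 602072 * (q - 5) ^ 4 + 110638 * (q - 5) ^ 5 + 13552 * (q - 5) ^ 6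
          + 1067 * (q - 5) ^ 7 + 49 * (q - 5) ^ 8 + (q - 5) ^ 9 := by ring
    rw [hid]; linarith
  have hq1 : (0:ℝ) < q + 1 := by linarith
  -- nonpositivity of the three weighted terms
  have T1 := mul_nonpos_of_nonneg_of_nonpos
    (mul_nonneg (mul_nonneg hB hq1.le) hD.le) h1
  have T2 := mul_nonpos_of_nonneg_of_nonpos (mul_nonneg hC2 hq1.le) h2'
  have T3 := mul_nonpos_of_nonneg_of_nonpos (mul_nonneg hC3 hD.le) h3
  have hKpos : 0 < (q ^ 9 + 5 * q ^ 8 + 4 * q ^ 7 + 8 * q ^ 5 - 6 * q ^ 4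
      - 3 * q ^ 3 - 5 * q ^ 2 - 2 * q - 2) * (q + 1) * D :=
    mul_pos (mul_pos hA hq1) hD
  have key : (q ^ 9 + 5 * q ^ 8 + 4 * q ^ 7 + 8 * q ^ 5 - 6 * q ^ 4
      - 3 * q ^ 3 - 5 * q ^ 2 - 2 * q - 2) * (q + 1) * D
      * (q ^ 2 * a1 + q * a2 + a3)
      = (q ^ 7 - 2 * q ^ 6 - 9 * q ^ 5 - 4 * q ^ 4 - 7 * q ^ 3 - 3 * q ^ 2 - q + 1)
          * (q + 1) * D * (-(q ^ 2 - q) * a1 + (q ^ 2 + 1) * a2 + (q - 1) * a3)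
        + (q ^ 11 + 5 * q ^ 10 + 5 * q ^ 9 - 3 * q ^ 8 + q ^ 7 - q ^ 6 - 6 * q ^ 5
            - q ^ 4 - q) * (q + 1) * (D * a1 + N * a2)
        + (q ^ 9 + 4 * q ^ 8 + 7 * q ^ 7 + 7 * q ^ 6 + 3 * q ^ 5 - 3 * q ^ 4
            - 7 * q ^ 3 - 7 * q ^ 2 - 4 * q - 1) * D
          * (-(q - 1) * a2 + (q + 1) * a3) := by
    rw [hDdef, hNdef]; ring
  have hcore : q ^ 2 * a1 + q * a2 + a3 ≤ 0 := by
    by_contra hpos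
    push_neg at hpos
    have := mul_pos hKpos hpos
    linarith
  have hfin : q ^ 2 * (a1 + n2) + q * (a2 + n1 - q * n2) + (a3 - q * n1)
      = q ^ 2 * a1 + q * a2 + a3 := by ring
  rw [hfin]
  exact hcore
end

section
/- Let q > 1 be a real number. Suppose a = (a1,a2,a3) ∈ ℝ³ satisfies q·a1 − a3 ≤ 0 and −q·a1 + (q−1)·a2 + a3 ≤ 0, and let n1, n2 ≥ 0 be real numbers. Then λ := a + n1·(0,−q,−1) + n2·(−q,q+1,1) satisfies both (q²+q)·λ1 + (q²+1)·λ2 − (q+1)·λ3 ≤ 0 and q²·λ1 + λ2 − q·λ3 ≤ 0. -/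
/-- Length-2 inductive step for the stratum `[135]` in the `Sp(6)` proof. -/
theorem sp6_step_135 (q a1 a2 a3 n1 n2 : ℝ) (hq : 1 < q)
    (h1 : q * a1 - a3 ≤ 0)
    (h2 : -q * a1 + (q - 1) * a2 + a3 ≤ 0)
    (hn1 : 0 ≤ n1) (hn2 : 0 ≤ n2) :
    (q ^ 2 + q) * (a1 - q * n2) + (q ^ 2 + 1) * (a2 - q * n1 + (q + 1) * n2) -
        (q + 1) * (a3 - n1 + n2) ≤ 0 ∧
    q ^ 2 * (a1 - q * n2) + (a2 - q * n1 + (q + 1) * n2) - q * (a3 - n1 + n2) ≤ 0 := by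
  have hq1 : 0 < q - 1 := by linarith
  have hq0 : 0 < q := by linarith
  have hA : 2 * q ^ 2 * (q * a1 - a3) ≤ 0 :=
    mul_nonpos_of_nonneg_of_nonpos (by positivity) h1
  have hB : (q ^ 2 + 1) * (-q * a1 + (q - 1) * a2 + a3) ≤ 0 :=
    mul_nonpos_of_nonneg_of_nonpos (by positivity) h2
  have hC : (q ^ 2 - q + 1) * (q * a1 - a3) ≤ 0 :=
    mul_nonpos_of_nonneg_of_nonpos (by nlinarith [sq_nonneg (q-1)]) h1
  have hn1' : 0 ≤ n1 * (q ^ 3 - 1) := mul_nonneg hn1 (by nlinarith)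
  constructor
  · have key : (q - 1) * ((q ^ 2 + q) * (a1 - q * n2) + (q ^ 2 + 1) * (a2 - q * n1 + (q + 1) * n2) -
        (q + 1) * (a3 - n1 + n2)) ≤ 0 := by nlinarith
    by_contra h; push_neg at h; nlinarith [mul_pos hq1 h]
  · have key : (q - 1) * (q ^ 2 * (a1 - q * n2) + (a2 - q * n1 + (q + 1) * n2) - q * (a3 - n1 + n2)) ≤ 0 := by
      nlinarith [mul_nonneg hn2 (show (0:ℝ) ≤ q^3 - 1 by nlinarith)]
    by_contra h; push_neg at h; nlinarith [mul_pos hq1 h]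
end

section
/- Let q ≥ 1 be a real number. Suppose a = (a1,a2,a3) ∈ ℝ³ satisfies −q·a1 + (q+1)·a2 + a3 ≤ 0 and (q+1)·a1 − (q²+1)·a2 + (q²+q)·a3 ≤ 0, and let n1, n2 ≥ 0 be real numbers. Then λ := a + n1·(0,0,−(q+1)) + n2·(q+1,1−q,q+1) satisfies −(q⁴+q²+q+1)·λ1 + (2q³+3q²+2q+1)·λ2 + (q⁴+2q³+q)·λ3 ≤ 0. -/
/-- Length-5 inductive step for the stratum `[362]` in the `Sp(6)` proof. -/
theorem sp6_step_362 (q a1 a2 a3 n1 n2 : ℝ) (hq : 1 ≤ q)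
    (h1 : -q * a1 + (q + 1) * a2 + a3 ≤ 0)
    (h2 : (q + 1) * a1 - (q ^ 2 + 1) * a2 + (q ^ 2 + q) * a3 ≤ 0)
    (hn1 : 0 ≤ n1) (hn2 : 0 ≤ n2) :
    -(q ^ 4 + q ^ 2 + q + 1) * (a1 + (q + 1) * n2) +
      (2 * q ^ 3 + 3 * q ^ 2 + 2 * q + 1) * (a2 + (1 - q) * n2) +
      (q ^ 4 + 2 * q ^ 3 + q) * (a3 - (q + 1) * n1 + (q + 1) * n2) ≤ 0 := by
  nlinarith [mul_nonneg (mul_nonneg hn1 (by nlinarith : (0:ℝ) ≤ q ^ 4 + 2 * q ^ 3 + q)) (by linarith : (0:ℝ) ≤ q + 1),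
    mul_nonpos_of_nonneg_of_nonpos (by nlinarith : (0:ℝ) ≤ q ^ 3 + q ^ 2 + 2 * q) h1,
    mul_nonpos_of_nonneg_of_nonpos (by nlinarith : (0:ℝ) ≤ q ^ 2 - 1) h2]
end

section
/- Let q ≥ 1 be a real number. Suppose λ ∈ ℝ⁴ can be written as λ = n1·(1−q,1−q,1−q,0) + n2·(1,1−q,−q,0) + n3·(1,0,−q,0) + t·(1,1,1,1) + μ, where n1, n2, n3 ≥ 0 and t are real numbers and μ = (μ1,μ2,μ3,μ4) ∈ ℝ⁴ satisfies μ1 ≥ μ2 ≥ μ3 and q²·(μ1−μ4) + q·(μ2−μ4) + (μ3−μ4) ≤ 0. Then λ1 ≥ λ2 ≥ λ3, q²·(λ1−λ4) + (λ2−λ4) + q·(λ3−λ4) ≤ 0, and q·(λ1−λ4) + q²·(λ2−λ4) + (λ3−λ4) ≤ 0. -/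
/-- Cone inclusion `C_Hasse + C_hw ⊆ ⟨C_zip⟩` for `GL₄` over `F_q`, type `(3,1)`. -/
theorem gl4_31_hasse_plus_hw_subset_zip (q : ℝ) (hq : 1 ≤ q)
    (l μ : ℝ × ℝ × ℝ × ℝ) (n1 n2 n3 t : ℝ)
    (hn1 : 0 ≤ n1) (hn2 : 0 ≤ n2) (hn3 : 0 ≤ n3)
    (hμ12 : μ.2.1 ≤ μ.1) (hμ23 : μ.2.2.1 ≤ μ.2.1)
    (hμ : q ^ 2 * (μ.1 - μ.2.2.2) + q * (μ.2.1 - μ.2.2.2) + (μ.2.2.1 - μ.2.2.2) ≤ 0)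
    (hl : l = n1 • (1 - q, 1 - q, 1 - q, (0 : ℝ)) + n2 • ((1 : ℝ), 1 - q, -q, (0 : ℝ)) +
              n3 • ((1 : ℝ), (0 : ℝ), -q, (0 : ℝ)) + t • ((1 : ℝ), (1 : ℝ), (1 : ℝ), (1 : ℝ)) + μ) :
    l.2.1 ≤ l.1 ∧ l.2.2.1 ≤ l.2.1 ∧
      q ^ 2 * (l.1 - l.2.2.2) + (l.2.1 - l.2.2.2) + q * (l.2.2.1 - l.2.2.2) ≤ 0 ∧
      q * (l.1 - l.2.2.2) + q ^ 2 * (l.2.1 - l.2.2.2) + (l.2.2.1 - l.2.2.2) ≤ 0 := by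
  obtain ⟨m1, m2, m3, m4⟩ := μ
  subst hl
  simp only [Prod.smul_mk, Prod.mk_add_mk, smul_eq_mul] at *
  refine ⟨by nlinarith, by nlinarith, ?_, ?_⟩
  · nlinarith [mul_nonneg hn1 (sq_nonneg q), mul_nonneg hn2 (sub_nonneg.2 hq),
      mul_nonneg (mul_nonneg hn1 hn1) hn1, sq_nonneg q,
      mul_nonneg (sub_nonneg.2 hq) (sub_nonneg.2 hμ23),
      mul_nonneg hn1 (mul_nonneg (sub_nonneg.2 hq) (sub_nonneg.2 hq))]
  · nlinarith [sq_nonneg q,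
      mul_nonneg (mul_nonneg (le_trans zero_le_one hq) (sub_nonneg.2 hq)) (sub_nonneg.2 hμ12),
      mul_nonneg hn1 (mul_nonneg (sub_nonneg.2 hq) (sub_nonneg.2 hq)),
      mul_nonneg (mul_nonneg hn2 (sq_nonneg q)) (sub_nonneg.2 hq)]
end

section
/- Let q ≥ 1 be a real number. Suppose a = (a1,a2,a3) ∈ ℝ³ satisfies −q·a1 − q²·a2 + (q²+q+1)·a3 ≤ 0 and (q²+q+1)·a1 − a2 − q·a3 ≤ 0, and let n1, n2 ≥ 0 be real numbers. Then λ := a + n1·(−q,−(q+1),−q) + n2·(1,q+1,1) satisfies both −q·λ2 + (q+1)·λ3 ≤ 0 and (q+1)·λ1 − λ2 ≤ 0. -/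
/-- Length-2 inductive step for the stratum `[2143]` in the `GL₄`, type `(3,1)` proof. -/
theorem gl4_31_step_2143 (q a1 a2 a3 n1 n2 : ℝ) (hq : 1 ≤ q)
    (h1 : -q * a1 - q ^ 2 * a2 + (q ^ 2 + q + 1) * a3 ≤ 0)
    (h2 : (q ^ 2 + q + 1) * a1 - a2 - q * a3 ≤ 0)
    (hn1 : 0 ≤ n1) (hn2 : 0 ≤ n2) :
    -q * (a2 - (q + 1) * n1 + (q + 1) * n2) + (q + 1) * (a3 - q * n1 + n2) ≤ 0 ∧
    (q + 1) * (a1 - q * n1 + n2) - (a2 - (q + 1) * n1 + (q + 1) * n2) ≤ 0 := by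
  have hq0 : (0:ℝ) < q := lt_of_lt_of_le one_pos hq
  have hp : (0:ℝ) < q ^ 3 + q ^ 2 + q + 1 := by positivity
  have hs : (0:ℝ) < q ^ 2 + q + 1 := by positivity
  have key1 : -q * a2 + (q + 1) * a3 ≤ 0 := by
    nlinarith [mul_le_mul_of_nonneg_left h1 hs.le, mul_le_mul_of_nonneg_left h2 hq0.le,
      mul_pos hp hp]
  have key2 : (q + 1) * a1 - a2 ≤ 0 := by
    nlinarith [mul_le_mul_of_nonneg_left h2 hs.le, mul_le_mul_of_nonneg_left h1 hq0.le,
      mul_pos hp hp]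
  have hn2q : 0 ≤ n2 * (q - 1) := mul_nonneg hn2 (by linarith)
  have hn1q : 0 ≤ n1 * (q - 1) := mul_nonneg hn1 (by linarith)
  constructor
  · nlinarith [key1, mul_nonneg hn2q (by linarith : (0:ℝ) ≤ q + 1)]
  · nlinarith [key2, mul_nonneg hn1q (by linarith : (0:ℝ) ≤ q + 1)]
end

section
/- Let q ≥ 2 be a real number. The set {(a1,a2,a3) ∈ ℝ³ : a1 ≥ a2, a3 ≥ 0, and q·a1 + a2 − a3 ≤ 0} is equal to the set of all linear combinations with nonnegative real coefficients of the three vectors (1,1,q+1), (1−q,1−q,0) and (1,−q,0). -/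
/-- For `q ≥ 2`, the cone `{(a1,a2,a3) : a1 ≥ a2, a3 ≥ 0, qa1 + a2 − a3 ≤ 0}` equals the set
of nonnegative real linear combinations of `(1,1,q+1)`, `(1−q,1−q,0)`, `(1,−q,0)`. -/
theorem gl4_22_cone_generators (q : ℝ) (hq : 2 ≤ q) :
    {a : ℝ × ℝ × ℝ | a.2.1 ≤ a.1 ∧ 0 ≤ a.2.2 ∧ q * a.1 + a.2.1 - a.2.2 ≤ 0} =
    {a : ℝ × ℝ × ℝ | ∃ c1 c2 c3 : ℝ, 0 ≤ c1 ∧ 0 ≤ c2 ∧ 0 ≤ c3 ∧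
        a = c1 • ((1 : ℝ), (1 : ℝ), q + 1) + c2 • (1 - q, 1 - q, (0 : ℝ)) +
            c3 • ((1 : ℝ), -q, (0 : ℝ))} := by
  have hq1 : (0:ℝ) < q + 1 := by linarith
  have hq2 : q - 1 > 0 := by linarith
  ext ⟨a1, a2, a3⟩
  simp only [Set.mem_setOf_eq, Prod.smul_mk, smul_eq_mul, Prod.mk_add_mk, Prod.mk.injEq]
  constructor
  · rintro ⟨h1, h2, h3⟩
    refine ⟨a3 / (q + 1), (a3 - (q * a1 + a2)) / ((q + 1) * (q - 1)),
      (a1 - a2) / (q + 1), ?_, ?_, ?_, ?_, ?_, ?_⟩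
    · positivity
    · apply div_nonneg (by linarith) (by positivity)
    · apply div_nonneg (by linarith) (by linarith)
    · field_simp; ring
    · field_simp; ring
    · field_simp; ring
  · rintro ⟨c1, c2, c3, h1, h2, h3, e1, e2, e3⟩
    subst e1; subst e2; subst e3
    refine ⟨by nlinarith, by nlinarith, by nlinarith [mul_nonneg h2 (mul_pos hq1 hq2).le]⟩
end

section
/- Let q ≥ 1 be a real number and set ε(q) := (q² + 2q + 1)/(q³ + 2q² + 1). Suppose a = (a1,a2,a3) ∈ ℝ³ satisfies the four inequalities q²·a1 + q·a2 + a3 ≤ 0, q·a1 + q·a2 + a3 ≤ 0, −q·a1 + (q²+q+1)·a2 − a3 ≤ 0, and a1 + a2 − (q+2)·a3 ≤ 0, and let n1, n2 ≥ 0 be real numbers. Then λ := a + n1·(0,0,q−1) + n2·(1−q,1−q,1−q) satisfies both λ2 ≤ 0 and λ1 + ε(q)·λ2 ≤ 0. -/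
/-- Length-5 inductive step for the stratum `[3421]` in the `GL₄`, type `(2,2)` proof. -/
theorem gl4_22_step_3421 (q a1 a2 a3 n1 n2 : ℝ) (hq : 1 ≤ q)
    (h1 : q ^ 2 * a1 + q * a2 + a3 ≤ 0)
    (h2 : q * a1 + q * a2 + a3 ≤ 0)
    (h3 : -q * a1 + (q ^ 2 + q + 1) * a2 - a3 ≤ 0)
    (h4 : a1 + a2 - (q + 2) * a3 ≤ 0)
    (hn1 : 0 ≤ n1) (hn2 : 0 ≤ n2) :
    a2 + n2 * (1 - q) ≤ 0 ∧
    (a1 + n2 * (1 - q)) +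
      ((q ^ 2 + 2 * q + 1) / (q ^ 3 + 2 * q ^ 2 + 1)) * (a2 + n2 * (1 - q)) ≤ 0 := by
  have hD : (0:ℝ) < q ^ 3 + 2 * q ^ 2 + 1 := by nlinarith
  have ha2 : a2 ≤ 0 := by nlinarith [h2, h3]
  have hne : n2 * (1 - q) ≤ 0 := mul_nonpos_of_nonneg_of_nonpos hn2 (by linarith)
  have key : (q ^ 3 + 2 * q ^ 2 + 1) * a1 + (q ^ 2 + 2 * q + 1) * a2 ≤ 0 := by nlinarith [h1, h4]
  set e : ℝ := (q ^ 2 + 2 * q + 1) / (q ^ 3 + 2 * q ^ 2 + 1) with he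
  have heD : e * (q ^ 3 + 2 * q ^ 2 + 1) = q ^ 2 + 2 * q + 1 := by
    exact div_mul_cancel₀ _ (ne_of_gt hD)
  have hε : 0 ≤ e := by positivity
  have hkey2 : a1 + e * a2 ≤ 0 := by nlinarith [mul_nonneg hε (neg_nonneg.mpr ha2)]
  refine ⟨by linarith, ?_⟩
  have : e * (n2 * (1 - q)) ≤ 0 := mul_nonpos_of_nonneg_of_nonpos hε hne
  nlinarith [hkey2, this]
end

section
/- Let q ≥ 1 be a real number and set ε(q) := (q² + 2q + 1)/(q³ + 2q² + 1). Suppose a = (a1,a2,a3) ∈ ℝ³ satisfies a2 ≤ 0, a1 + ε(q)·a2 ≤ 0, and a1 − a3 ≤ 0, and let n1, n2 ≥ 0 be real numbers. Then λ := a + n1·(1,1,q+1) + n2·(1,−q,0) satisfies q·λ1 + λ2 − λ3 ≤ 0. -/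
/-- Final inductive step for the longest element `[4321]` in the `GL₄`, type `(2,2)` proof. -/
theorem gl4_22_step_4321 (q a1 a2 a3 n1 n2 : ℝ) (hq : 1 ≤ q)
    (h1 : a2 ≤ 0)
    (h2 : a1 + ((q ^ 2 + 2 * q + 1) / (q ^ 3 + 2 * q ^ 2 + 1)) * a2 ≤ 0)
    (h3 : a1 - a3 ≤ 0)
    (hn1 : 0 ≤ n1) (hn2 : 0 ≤ n2) :
    q * (a1 + n1 + n2) + (a2 + n1 - q * n2) - (a3 + (q + 1) * n1) ≤ 0 := by
  have hd : (0:ℝ) < q ^ 3 + 2 * q ^ 2 + 1 := by nlinarith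
  have h2' : (q ^ 3 + 2 * q ^ 2 + 1) * a1 + (q ^ 2 + 2 * q + 1) * a2 ≤ 0 := by
    have := mul_le_mul_of_nonneg_left h2 hd.le
    field_simp at this
    linarith [this]
  nlinarith [mul_le_mul_of_nonneg_left h3 (by nlinarith : (0:ℝ) ≤ q ^ 3 + 2 * q ^ 2 + 1),
    mul_le_mul_of_nonneg_left h1 (by nlinarith : (0:ℝ) ≤ q ^ 2 + q + 2), sq_nonneg q]
end

section
/- Let q ≥ 1 be a real number. Suppose a = (a1,a2,a3) ∈ ℝ³ satisfies q²·a1 + a2 − q·a3 ≤ 0, −(q−1)·a1 − a2 + q·a3 ≤ 0, and −q·a1 + (q−1)·a2 + a3 ≤ 0, and let n1, n2 ≥ 0 be real numbers. Then λ := a + n1·(0,−1,−q) + n2·(1−q,1,1) satisfies λ1 ≤ 0, λ1 − λ2 + q·λ3 ≤ 0, and q·λ1 + (q²−q+1)·λ2 − λ3 ≤ 0. -/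
/-- Length-3 inductive step for the stratum `[2341]` in the `U(4)`, signature `(3,1)` proof. -/
theorem u4_31_step_2341 (q a1 a2 a3 n1 n2 : ℝ) (hq : 1 ≤ q)
    (h1 : q ^ 2 * a1 + a2 - q * a3 ≤ 0)
    (h2 : -(q - 1) * a1 - a2 + q * a3 ≤ 0)
    (h3 : -q * a1 + (q - 1) * a2 + a3 ≤ 0)
    (hn1 : 0 ≤ n1) (hn2 : 0 ≤ n2) :
    a1 + n2 * (1 - q) ≤ 0 ∧
    (a1 + n2 * (1 - q)) - (a2 - n1 + n2) + q * (a3 - q * n1 + n2) ≤ 0 ∧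
    q * (a1 + n2 * (1 - q)) + (q ^ 2 - q + 1) * (a2 - n1 + n2) - (a3 - q * n1 + n2) ≤ 0 := by
  have hpos : 0 < q ^ 2 - q + 1 := by nlinarith
  have ha1 : a1 ≤ 0 := by nlinarith
  refine ⟨by nlinarith, by nlinarith [mul_nonneg hn1 (by nlinarith : (0:ℝ) ≤ q^2-1), mul_nonneg (le_trans zero_le_one hq) (neg_nonneg.2 ha1)], ?_⟩
  nlinarith [mul_nonpos_of_nonneg_of_nonpos (sq_nonneg q) h1,
    mul_nonpos_of_nonneg_of_nonpos (mul_nonneg (sub_nonneg.2 hq) (by positivity : (0:ℝ) ≤ q^2+1)) h3,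
    mul_nonneg (mul_nonneg hpos.le hn1) (sq_nonneg (q-1)), hpos, sq_nonneg (q-1)]
end
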